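/- arXiv:2311.15109 — 2 statements merged into one kernel-verified Lean document; each statement's English description precedes it below -/
import Mathlib

section
/- Let A be an n×n real positive definite matrix with strictly positive diagonal entries and strictly negative off-diagonal entries. Then every cofactor of A is strictly positive. -/
open Matrix

/-- The (i,j) cofactor of a square matrix: `adjugate A` is the transpose of the
cofactor matrix, so `C^A_{i,j} = adjugate A j i`. -/
theorem cofactors_pos_of_posDef {n : ℕ} (A : Matrix (Fin n) (Fin n) ℝ)
    (hA : A.PosDef)
    (hdiag : ∀ i, 0 < A i i)
    (hoff : ∀ i j, i ≠ j → A i j < 0) :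
    ∀ i j, 0 < A.adjugate j i := by
  intro i j
  have hdet : 0 < A.det := hA.det_pos
  set x : Fin n → ℝ := fun k => A.adjugate k i with hxdef
  -- A *ᵥ x = det A • e_i
  have hAx : A.mulVec x = A.det • (Pi.single i 1 : Fin n → ℝ) := by
    funext k
    have h1 : A.mulVec x k = (A * A.adjugate) k i := by
      simp [Matrix.mulVec, Matrix.mul_apply, dotProduct, hxdef]
    rw [h1, Matrix.mul_adjugate]
    simp [Matrix.one_apply, Pi.single_apply, Matrix.smul_apply]
  -- negative and positive parts
  set y : Fin n → ℝ := fun k => max (-(x k)) 0 with hydef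
  set p : Fin n → ℝ := fun k => max (x k) 0 with hpdef
  have hy0 : ∀ k, 0 ≤ y k := fun k => le_max_right _ _
  have hp0 : ∀ k, 0 ≤ p k := fun k => le_max_right _ _
  have hxpy : ∀ k, x k = p k - y k := by
    intro k
    simp only [hydef, hpdef]
    rcases le_total (x k) 0 with h | h
    · rw [max_eq_right h, max_eq_left (by linarith)]; ring
    · rw [max_eq_left h, max_eq_right (by linarith)]; ring
  have hyp : ∀ k, y k * p k = 0 := by
    intro k
    simp only [hydef, hpdef]
    rcases le_total (x k) 0 with h | h
    · rw [max_eq_right h]; ring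
    · rw [max_eq_right (by linarith : -(x k) ≤ 0)]; ring
  -- y ⬝ᵥ A *ᵥ x = det A * y i ≥ 0
  have hyAx : 0 ≤ y ⬝ᵥ A.mulVec x := by
    rw [hAx]
    have : y ⬝ᵥ (A.det • (Pi.single i 1 : Fin n → ℝ)) = A.det * y i := by
      simp [dotProduct, Pi.single_apply, mul_comm]
    rw [this]
    exact mul_nonneg hdet.le (hy0 i)
  -- y ⬝ᵥ A *ᵥ p ≤ 0 (cross terms)
  have hyAp : y ⬝ᵥ A.mulVec p ≤ 0 := by
    rw [Matrix.dotProduct_mulVec]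
    unfold dotProduct Matrix.vecMul
    apply Finset.sum_nonpos
    intro l _
    simp only [dotProduct]
    rw [Finset.sum_mul]
    apply Finset.sum_nonpos
    intro k _
    rcases eq_or_ne k l with rfl | hkl
    · rw [mul_comm (y k) (A k k), mul_assoc, hyp k]; ring_nf; simp
    · have h1 : A k l < 0 := hoff k l hkl
      have : y k * A k l ≤ 0 := mul_nonpos_of_nonneg_of_nonpos (hy0 k) h1.le
      exact mul_nonpos_of_nonpos_of_nonneg this (hp0 l)
  -- hence y ⬝ᵥ A *ᵥ y ≤ 0, so y = 0
  have hyAy : y ⬝ᵥ A.mulVec y ≤ 0 := by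
    have hsub : A.mulVec y = A.mulVec p - A.mulVec x := by
      rw [← Matrix.mulVec_sub]
      have hpx : p - x = y := by
        funext k
        have := hxpy k
        show p k - x k = y k
        linarith
      rw [hpx]
    rw [hsub, dotProduct_sub]
    linarith
  have hyzero : y = 0 := by
    by_contra hne
    have := (Matrix.posDef_iff_dotProduct_mulVec.mp hA).2 hne
    simp only [star_trivial] at this
    linarith
  have hxnn : ∀ k, 0 ≤ x k := by
    intro k
    have : y k = 0 := congrFun hyzero k
    simp only [hydef] at this
    by_contra h
    push_neg at h
    have h2 : max (-(x k)) 0 = -(x k) := max_eq_left (by linarith)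
    rw [h2] at this
    linarith
  -- x ≠ 0
  have hxne : ∃ k, 0 < x k := by
    by_contra h
    push_neg at h
    have hx0 : x = 0 := funext fun k => le_antisymm (h k) (hxnn k)
    have : A.mulVec x i = A.det := by
      rw [hAx]; simp
    rw [hx0] at this
    simp [Matrix.mulVec_zero] at this
    linarith
  obtain ⟨k, hk⟩ := hxne
  -- strict positivity of all entries of x
  have hstrict : ∀ m, 0 < x m := by
    intro m
    rcases lt_or_eq_of_le (hxnn m) with h | h
    · exact h
    · exfalso
      have hkm : k ≠ m := by rintro rfl; linarith
      have hAxm : A.mulVec x m = ∑ l, A m l * x l := by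
        simp [Matrix.mulVec, dotProduct]
      have hlt : (∑ l, A m l * x l) < ∑ l : Fin n, (0:ℝ) := by
        apply Finset.sum_lt_sum
        · intro l _
          rcases eq_or_ne l m with rfl | hlm
          · rw [← h]; ring_nf; simp
          · exact mul_nonpos_of_nonpos_of_nonneg (hoff m l (Ne.symm hlm)).le (hxnn l)
        · exact ⟨k, Finset.mem_univ k,
            mul_neg_of_neg_of_pos (hoff m k (Ne.symm hkm)) hk⟩
      simp only [Finset.sum_const, smul_zero] at hlt
      have hge : 0 ≤ A.mulVec x m := by
        rw [hAx]
        simp only [Pi.smul_apply, Pi.single_apply, smul_eq_mul]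
        positivity
      rw [hAxm] at hge
      linarith
  exact hstrict j
end

section
/- Let D ∈ R^{N×n}, and for i ∈ [N] let D^i denote the matrix equal to D in row i and zero elsewhere. Let V_i = diag(γ_{i1},…,γ_{in}) with all γ_{ij} > 0. Then the block matrix H_i = [[D^i V_i (D^i)ᵀ, D^i], [(D^i)ᵀ, V_i^{−1}]] is positive semidefinite for each i, and hence H = [[T*, D], [Dᵀ, S^{−1}]] ⪰ 0 where T* = Σ_i D^i V_i (D^i)ᵀ and S^{−1} = Σ_i V_i^{−1}. Consequently T* − D S Dᵀ ⪰ 0. -/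
open Matrix

/-- Each block matrix `H_i = [[Dⁱ V_i (Dⁱ)ᵀ, Dⁱ], [(Dⁱ)ᵀ, V_i⁻¹]]` is PSD, the
sum `H = [[T*, D], [Dᵀ, S⁻¹]]` is PSD, and consequently `T* − D S Dᵀ ⪰ 0`,
where `Dⁱ` keeps row `i` of `D` and zeroes the others, `V_i = diag(γ_i)`,
`T* = Σ_i Dⁱ V_i (Dⁱ)ᵀ`, and `S = diag(s)` with `s_j = (Σ_i 1/γ_{ij})⁻¹`. -/
theorem blocks_psd_and_schur {N n : ℕ}
    (D : Matrix (Fin N) (Fin n) ℝ)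
    (γ : Fin N → Fin n → ℝ) (hγ : ∀ i j, 0 < γ i j)
    (Drow : Fin N → Matrix (Fin N) (Fin n) ℝ)
    (hDrow : ∀ i k l, Drow i k l = if k = i then D k l else 0)
    (Tstar : Matrix (Fin N) (Fin N) ℝ)
    (hT : Tstar = ∑ i, Drow i * diagonal (γ i) * (Drow i)ᵀ)
    (S : Matrix (Fin n) (Fin n) ℝ)
    (hS : S = diagonal fun j => (∑ i, (γ i j)⁻¹)⁻¹) :
    (∀ i, (fromBlocks (Drow i * diagonal (γ i) * (Drow i)ᵀ) (Drow i)
        (Drow i)ᵀ (diagonal fun j => (γ i j)⁻¹)).PosSemidef) ∧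
      (fromBlocks Tstar D Dᵀ (diagonal fun j => ∑ i, (γ i j)⁻¹)).PosSemidef ∧
      (Tstar - D * S * Dᵀ).PosSemidef := by
  have hi : ∀ i, (fromBlocks (Drow i * diagonal (γ i) * (Drow i)ᵀ) (Drow i)
      (Drow i)ᵀ (diagonal fun j => (γ i j)⁻¹)).PosSemidef := by
    intro i
    have hD : (diagonal fun j => (γ i j)⁻¹).PosDef :=
      posDef_diagonal_iff.mpr fun j => inv_pos.mpr (hγ i j)
    haveI : Invertible (diagonal fun j => (γ i j)⁻¹) := hD.isUnit.invertible
    have hconj : (Drow i)ᴴ = (Drow i)ᵀ := conjTranspose_eq_transpose_of_trivial _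
    rw [← hconj, PosDef.fromBlocks₂₂ _ _ hD]
    have hinv : (diagonal fun j => (γ i j)⁻¹)⁻¹ = diagonal (γ i) := by
      apply inv_eq_right_inv
      rw [diagonal_mul_diagonal, ← diagonal_one]
      exact congrArg diagonal (funext fun j => inv_mul_cancel₀ (hγ i j).ne')
    rw [hinv, hconj]
    simpa using Matrix.PosSemidef.zero (n := Fin N) (R := ℝ)
  refine ⟨hi, ?_⟩
  have hDsum : ∑ i, Drow i = D := by
    ext k l
    simp [Matrix.sum_apply, hDrow]
  have hsumH : (fromBlocks Tstar D Dᵀ (diagonal fun j => ∑ i, (γ i j)⁻¹)).PosSemidef := by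
    have : fromBlocks Tstar D Dᵀ (diagonal fun j => ∑ i, (γ i j)⁻¹)
        = ∑ i, fromBlocks (Drow i * diagonal (γ i) * (Drow i)ᵀ) (Drow i)
          (Drow i)ᵀ (diagonal fun j => (γ i j)⁻¹) := by
      ext x y
      cases x <;> cases y <;>
        simp [fromBlocks, hT, ← hDsum, Matrix.sum_apply, diagonal,
          Finset.sum_ite_eq', Finset.sum_apply, transpose_sum, Finset.sum_ite]
    rw [this]
    exact Finset.sum_induction _ _ (fun a b ha hb => ha.add hb) (PosSemidef.zero)
      fun i _ => hi i
  refine ⟨hsumH, ?_⟩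
  rcases Nat.eq_zero_or_pos N with hN | hN
  · subst hN
    refine ⟨?_, fun x => by simp [mulVec, dotProduct, Finsupp.sum, Finset.eq_empty_of_isEmpty]⟩
    ext i
    exact i.elim0
  · haveI : Nonempty (Fin N) := ⟨⟨0, hN⟩⟩
    have hD2 : (diagonal fun j => ∑ i, (γ i j)⁻¹).PosDef :=
      posDef_diagonal_iff.mpr fun j =>
        Finset.sum_pos (fun i _ => inv_pos.mpr (hγ i j)) Finset.univ_nonempty
    haveI : Invertible (diagonal fun j => ∑ i, (γ i j)⁻¹) := hD2.isUnit.invertible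
    have hconj : Dᴴ = Dᵀ := conjTranspose_eq_transpose_of_trivial _
    have h := (PosDef.fromBlocks₂₂ Tstar D hD2).mp (by rwa [hconj])
    have hinv : (diagonal fun j => ∑ i, (γ i j)⁻¹)⁻¹ = S := by
      rw [hS]
      apply inv_eq_right_inv
      rw [diagonal_mul_diagonal, ← diagonal_one]
      exact congrArg diagonal (funext fun j => mul_inv_cancel₀
        (Finset.sum_pos (fun i _ => inv_pos.mpr (hγ i j)) Finset.univ_nonempty).ne')
    rwa [hinv, hconj] at h
end
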